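/- Let B_0,...,B_n be n+1 orthonormal bases of C^n and let X be the union (as a multiset) of their vectors. Then X attains the Welch bound for k=2 with equality, i.e., binom(n+1,2) · Σ_{x,y∈X} |⟨x,y⟩|^4 = (Σ_{x∈X} |⟨x,x⟩|^2)^2, if and only if the bases B_0,...,B_n are pairwise mutually unbiased. -/

import Mathlib

theorem welch_k2_equality_iff_mub (n : ℕ) (hn : 1 ≤ n)
    (B : Fin (n + 1) → Fin n → EuclideanSpace ℂ (Fin n))
    (horth : ∀ t, Orthonormal ℂ (B t)) :
    (((n + 1).choose 2 : ℝ) *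
        ∑ t, ∑ i, ∑ s, ∑ j, ‖(inner ℂ (B t i) (B s j) : ℂ)‖ ^ 4 =
      (∑ t, ∑ i, ‖B t i‖ ^ 4) ^ 2) ↔
    (∀ t s, t ≠ s → ∀ i j,
      ‖(inner ℂ (B t i) (B s j) : ℂ)‖ = 1 / Real.sqrt n) := by
  haveI : Nonempty (Fin n) := Fin.pos_iff_nonempty.mp hn
  have hn0 : (n : ℝ) ≠ 0 := by positivity
  set a : Fin (n+1) → Fin (n+1) → Fin n → Fin n → ℝ :=
    fun t s i j => ‖(inner ℂ (B t i) (B s j) : ℂ)‖ ^ 2 with ha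
  have hnorm : ∀ t i, ‖B t i‖ = 1 := fun t i => (horth t).1 i
  -- Parseval
  have parseval : ∀ t s i, ∑ j, a t s i j = 1 := by
    intro t s i
    let b : OrthonormalBasis (Fin n) ℂ (EuclideanSpace ℂ (Fin n)) :=
      OrthonormalBasis.mk (horth s) (by
        rw [← coe_basisOfOrthonormalOfCardEqFinrank (horth s)
          (by simp [finrank_euclideanSpace_fin])]
        exact (basisOfOrthonormalOfCardEqFinrank (horth s) _).span_eq.ge)
    have hcoe : ⇑b = B s := OrthonormalBasis.coe_mk _ _
    have h3 : ∀ j, ‖b.repr (B t i) j‖ = ‖(inner ℂ (B t i) (B s j) : ℂ)‖ := by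
      intro j
      rw [b.repr_apply_apply, hcoe, norm_inner_symm]
    have h1 : (1 : ℝ) = Real.sqrt (∑ j, a t s i j) := by
      rw [ha]
      simp only [← h3]
      rw [← EuclideanSpace.norm_eq, b.repr.norm_map, hnorm]
    exact Real.sqrt_eq_one.mp h1.symm
  set E : Fin (n+1) → Fin (n+1) → ℝ :=
    fun t s => ∑ i, ∑ j, (a t s i j - 1/n)^2 with hE
  have hEnn : ∀ t s, 0 ≤ E t s := by
    intro t s
    exact Finset.sum_nonneg fun i _ => Finset.sum_nonneg fun j _ => sq_nonneg _
  -- key identity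
  have key : ∀ t s, ∑ i, ∑ j, ‖(inner ℂ (B t i) (B s j) : ℂ)‖ ^ 4 = 1 + E t s := by
    intro t s
    have inner_eq : ∀ i, ∑ j, (a t s i j - 1/n)^2 = (∑ j, (a t s i j)^2) - 1/n := by
      intro i
      have h5 : ∀ j ∈ Finset.univ, (a t s i j - 1/n)^2
          = (a t s i j)^2 - (2/n) * (a t s i j) + 1/n^2 := by
        intro j _; field_simp; ring
      rw [Finset.sum_congr rfl h5]
      rw [Finset.sum_add_distrib, Finset.sum_sub_distrib, ← Finset.mul_sum, parseval,
        Finset.sum_const, Finset.card_univ, Fintype.card_fin]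
      field_simp
      ring_nf
      rw [← mul_pow, mul_inv_cancel₀ hn0]
      ring
    have h4 : ∀ i j, ‖(inner ℂ (B t i) (B s j) : ℂ)‖ ^ 4 = (a t s i j)^2 := by
      intro i j; rw [ha]; ring
    simp only [h4, hE, inner_eq, Finset.sum_sub_distrib, Finset.sum_const,
      Finset.card_univ, Fintype.card_fin, nsmul_eq_mul]
    field_simp
    ring
  -- diagonal
  have hdiag : ∀ t, ∑ i, ∑ j, ‖(inner ℂ (B t i) (B t j) : ℂ)‖ ^ 4 = (n : ℝ) := by
    intro t
    have hij := orthonormal_iff_ite.mp (horth t)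
    have : ∀ i ∈ Finset.univ, ∑ j, ‖(inner ℂ (B t i) (B t j) : ℂ)‖ ^ 4 = 1 := by
      intro i _
      simp [hij, apply_ite (fun z : ℂ => ‖z‖ ^ 4), apply_ite (fun z : ℂ => ‖z‖)]
    rw [Finset.sum_congr rfl this]
    simp
  have hEdiag : ∀ t, E t t = (n : ℝ) - 1 := by
    intro t
    have := key t t
    rw [hdiag t] at this
    linarith
  -- off-diagonal sum
  set F : ℝ := ∑ t, ∑ s ∈ Finset.univ.erase t, E t s with hF
  have hFnn : 0 ≤ F :=
    Finset.sum_nonneg fun t _ => Finset.sum_nonneg fun s _ => hEnn t s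
  -- total
  have total : (∑ t, ∑ i, ∑ s, ∑ j, ‖(inner ℂ (B t i) (B s j) : ℂ)‖ ^ 4)
      = 2 * n * (n + 1) + F := by
    have hswap : (∑ t, ∑ i, ∑ s, ∑ j, ‖(inner ℂ (B t i) (B s j) : ℂ)‖ ^ 4)
        = ∑ t, ∑ s, ∑ i, ∑ j, ‖(inner ℂ (B t i) (B s j) : ℂ)‖ ^ 4 :=
      Finset.sum_congr rfl fun t _ => Finset.sum_comm
    rw [hswap]
    have h6 : ∀ t ∈ (Finset.univ : Finset (Fin (n+1))),
        ∑ s, ∑ i, ∑ j, ‖(inner ℂ (B t i) (B s j) : ℂ)‖ ^ 4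
        = (n + 1 : ℝ) + (E t t + ∑ s ∈ Finset.univ.erase t, E t s) := by
      intro t _
      have : ∀ s ∈ (Finset.univ : Finset (Fin (n+1))),
          ∑ i, ∑ j, ‖(inner ℂ (B t i) (B s j) : ℂ)‖ ^ 4 = 1 + E t s :=
        fun s _ => key t s
      rw [Finset.sum_congr rfl this, Finset.sum_add_distrib, Finset.sum_const,
        Finset.card_univ, Fintype.card_fin, nsmul_eq_mul, mul_one,
        ← Finset.add_sum_erase _ _ (Finset.mem_univ t)]
      push_cast
      ring
    rw [Finset.sum_congr rfl h6]
    simp only [Finset.sum_add_distrib, Finset.sum_const, Finset.card_univ,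
      Fintype.card_fin, nsmul_eq_mul]
    have h7 : ∑ t, E t t = ((n : ℝ) + 1) * ((n : ℝ) - 1) := by
      rw [Finset.sum_congr rfl fun t _ => hEdiag t]
      simp [mul_comm]
      ring
    rw [h7, ← hF]
    push_cast
    ring
  -- RHS
  have hRHS : (∑ t, ∑ i, ‖B t i‖ ^ 4) = ((n : ℝ) + 1) * n := by
    have : ∀ t ∈ (Finset.univ : Finset (Fin (n+1))), ∑ i, ‖B t i‖ ^ 4 = (n : ℝ) := by
      intro t _
      simp [hnorm]
    rw [Finset.sum_congr rfl this]
    simp [mul_comm]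
  have hchoose : (((n + 1).choose 2 : ℕ) : ℝ) = ((n : ℝ) + 1) * n / 2 := by
    rw [Nat.cast_choose_two]
    push_cast
    ring_nf
  rw [total, hRHS, hchoose]
  have hc : (0 : ℝ) < ((n : ℝ) + 1) * n / 2 := by positivity
  have equiv1 : ((n : ℝ) + 1) * n / 2 * (2 * n * (n + 1) + F)
      = (((n : ℝ) + 1) * n) ^ 2 ↔ F = 0 := by
    constructor
    · intro h
      nlinarith
    · intro h
      rw [h]
      ring
  rw [equiv1]
  -- F = 0 ↔ MUB
  constructor
  · intro hF0 t s hts i j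
    have h8 := (Finset.sum_eq_zero_iff_of_nonneg
      (fun t _ => Finset.sum_nonneg fun s _ => hEnn t s)).mp hF0 t (Finset.mem_univ t)
    have h9 := (Finset.sum_eq_zero_iff_of_nonneg (fun s _ => hEnn t s)).mp h8 s
      (Finset.mem_erase.mpr ⟨hts.symm, Finset.mem_univ s⟩)
    have h10 := (Finset.sum_eq_zero_iff_of_nonneg
      (fun i _ => Finset.sum_nonneg fun j _ => sq_nonneg _)).mp h9 i (Finset.mem_univ i)
    have h11 := (Finset.sum_eq_zero_iff_of_nonneg
      (fun j _ => sq_nonneg _)).mp h10 j (Finset.mem_univ j)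
    have h12 : a t s i j = 1 / n := by
      have := sq_eq_zero_iff.mp h11
      linarith
    have h13 : ‖(inner ℂ (B t i) (B s j) : ℂ)‖ = Real.sqrt (1 / n) := by
      rw [← Real.sqrt_sq (norm_nonneg _)]
      exact congrArg Real.sqrt h12
    rw [h13, one_div, Real.sqrt_inv, one_div]
  · intro hmub
    rw [hF]
    apply Finset.sum_eq_zero
    intro t _
    apply Finset.sum_eq_zero
    intro s hs
    have hts : t ≠ s := fun h => (Finset.mem_erase.mp hs).1 h.symm
    rw [hE]
    apply Finset.sum_eq_zero
    intro i _
    apply Finset.sum_eq_zero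
    intro j _
    have h14 : a t s i j = 1 / n := by
      rw [ha]
      simp only
      rw [hmub t s hts i j, div_pow, one_pow, Real.sq_sqrt (by positivity)]
    rw [h14, sub_self, zero_pow two_ne_zero]
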